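/- Let A be a ring and let C be a full additive subcategory of the category of finitely generated A-modules that is closed under submodules. Then C equals sub(X_C) where X_C is the direct sum of (representatives of isomorphism classes of) all modules in C; that is, every submodule-closed additive subcategory of f.g. modules is of the form sub X for some (possibly infinitely generated) module X. -/

import Mathlib

open scoped DirectSum

universe u v

theorem aux_pi_fin {A : Type u} [Ring A]
    (C : (M : Type u) → [AddCommGroup M] → [Module A M] → Prop)
    (hiso : ∀ (M N : Type u) [AddCommGroup M] [Module A M] [AddCommGroup N] [Module A N],
      C M → Nonempty (M ≃ₗ[A] N) → C N)
    (hzero : ∀ (M : Type u) [AddCommGroup M] [Module A M], Subsingleton M → C M)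
    (hsum : ∀ (M N : Type u) [AddCommGroup M] [Module A M] [AddCommGroup N] [Module A N],
      C M → C N → C (M × N)) :
    ∀ (m : ℕ) (G : Fin m → Type u) (_ : ∀ k, AddCommGroup (G k)) (_ : ∀ k, Module A (G k)),
      (∀ k, C (G k)) → C ((k : Fin m) → G k) := by
  intro m
  induction m with
  | zero =>
    intro G _ _ _
    exact hzero _ ⟨fun a b => funext fun k => k.elim0⟩
  | succ m ih =>
    intro G _ _ hG
    have h0 : C (G 0 × ((k : Fin m) → G k.succ)) :=
      hsum _ _ (hG 0) (ih (fun k => G k.succ) _ _ (fun k => hG k.succ))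
    refine hiso _ _ h0 ⟨?_⟩
    exact
      { toFun := fun p => Fin.cons p.1 p.2
        invFun := fun g => (g 0, fun k => g k.succ)
        map_add' := by
          intro p q
          funext k
          refine Fin.cases ?_ (fun j => ?_) k <;> simp
        map_smul' := by
          intro c p
          funext k
          refine Fin.cases ?_ (fun j => ?_) k <;> simp
        left_inv := by
          intro p
          simp
        right_inv := by
          intro g
          funext k
          refine Fin.cases ?_ (fun j => ?_) k <;> simp }

theorem aux_pi {A : Type u} [Ring A]
    (C : (M : Type u) → [AddCommGroup M] → [Module A M] → Prop)
    (hiso : ∀ (M N : Type u) [AddCommGroup M] [Module A M] [AddCommGroup N] [Module A N],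
      C M → Nonempty (M ≃ₗ[A] N) → C N)
    (hzero : ∀ (M : Type u) [AddCommGroup M] [Module A M], Subsingleton M → C M)
    (hsum : ∀ (M N : Type u) [AddCommGroup M] [Module A M] [AddCommGroup N] [Module A N],
      C M → C N → C (M × N))
    (κ : Type u) [Fintype κ] (G : κ → Type u) [∀ k, AddCommGroup (G k)] [∀ k, Module A (G k)]
    (hG : ∀ k, C (G k)) : C ((k : κ) → G k) := by
  classical
  let e := (Fintype.equivFin κ).symm
  have h := aux_pi_fin C hiso hzero hsum (Fintype.card κ) (fun j => G (e j)) _ _ (fun j => hG _)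
  exact hiso _ _ h ⟨LinearEquiv.piCongrLeft A G e⟩


/-- Every submodule-closed additive class `C` of finitely generated `A`-modules (a class of
f.g. modules closed under isomorphism, submodules, and finite direct sums) is of the form
`sub X` for some `A`-module `X`: `C` consists exactly of the finitely generated modules that
embed into a finite direct sum of copies of `X`.  (One may take `X = X_C`, the direct sum of
representatives of all isomorphism classes of modules in `C`.) -/
theorem submodule_closed_eq_sub {A : Type u} [Ring A]
    (C : (M : Type u) → [AddCommGroup M] → [Module A M] → Prop)
    -- every member of `C` is finitely generated
    (hfg : ∀ (M : Type u) [AddCommGroup M] [Module A M], C M → Module.Finite A M)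
    -- `C` is closed under isomorphism
    (hiso : ∀ (M N : Type u) [AddCommGroup M] [Module A M] [AddCommGroup N] [Module A N],
      C M → Nonempty (M ≃ₗ[A] N) → C N)
    -- `C` is closed under (finitely generated) submodules
    (hsub : ∀ (M N : Type u) [AddCommGroup M] [Module A M] [AddCommGroup N] [Module A N],
      C N → Module.Finite A M → (∃ f : M →ₗ[A] N, Function.Injective f) → C M)
    -- `C` contains the zero module
    (hzero : ∀ (M : Type u) [AddCommGroup M] [Module A M], Subsingleton M → C M)
    -- `C` is closed under finite direct sums
    (hsum : ∀ (M N : Type u) [AddCommGroup M] [Module A M] [AddCommGroup N] [Module A N],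
      C M → C N → C (M × N)) :
    ∃ (X : Type u) (_ : AddCommGroup X) (_ : Module A X),
      ∀ (M : Type u) [AddCommGroup M] [Module A M],
        (C M ↔ Module.Finite A M ∧
          ∃ (n : ℕ) (f : M →ₗ[A] (Fin n → X)), Function.Injective f) := by
  classical
  -- index type: all quotients of free modules that lie in `C`
  let ι : Type u := Σ n : ℕ, {K : Submodule A (Fin n → A) // C ((Fin n → A) ⧸ K)}
  let F : ι → Type u := fun i => (Fin i.1 → A) ⧸ i.2.1
  have hF : ∀ i, C (F i) := fun i => i.2.2
  refine ⟨⨁ i, F i, inferInstance, inferInstance, ?_⟩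
  intro M _ _
  constructor
  · -- forward: M ∈ C embeds into one copy of X
    intro hM
    have hMfin : Module.Finite A M := hfg M hM
    obtain ⟨n, φ, hφ⟩ := Module.Finite.exists_fin' A M
    have e : ((Fin n → A) ⧸ LinearMap.ker φ) ≃ₗ[A] M := φ.quotKerEquivOfSurjective hφ
    have hQ : C ((Fin n → A) ⧸ LinearMap.ker φ) := hiso M _ hM ⟨e.symm⟩
    let i : ι := ⟨n, ⟨LinearMap.ker φ, hQ⟩⟩
    refine ⟨hMfin, 1, LinearMap.pi (fun _ : Fin 1 =>
      (DirectSum.lof A ι F i) ∘ₗ (e.symm : M →ₗ[A] F i)), ?_⟩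
    intro m₁ m₂ h
    have h0 := congrFun h 0
    simp only [LinearMap.pi_apply, LinearMap.comp_apply] at h0
    have := congrArg (DirectSum.component A ι F i) h0
    simp only [DirectSum.component.lof_self] at this
    exact e.symm.injective this
  · -- backward: a f.g. module embedding into `Fin n → X` is in `C`
    rintro ⟨hMfin, n, f, hf⟩
    obtain ⟨s, hs⟩ := (Module.finite_def.mp hMfin)
    -- finite support set
    let S : Finset ι := s.biUnion fun m =>
      (Finset.univ : Finset (Fin n)).biUnion fun a => DFinsupp.support (f m a)
    -- the submodule supported on S
    let W : Submodule A (Fin n → ⨁ i, F i) :=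
      { carrier := {v | ∀ a : Fin n, ∀ i : ι, i ∉ S → v a i = 0}
        add_mem' := by
          intro v w hv hw a i hi
          simp [hv a i hi, hw a i hi]
        zero_mem' := by intro a i _; simp
        smul_mem' := by
          intro c v hv a i hi
          rw [Pi.smul_apply, DFinsupp.smul_apply, hv a i hi, smul_zero] }
    have hrange : ∀ m : M, f m ∈ W := by
      intro m
      have hm : m ∈ Submodule.span A (s : Set M) := by rw [hs]; trivial
      have : f m ∈ Submodule.map f (Submodule.span A (s : Set M)) :=
        Submodule.mem_map_of_mem hm
      rw [Submodule.map_span] at this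
      refine Submodule.span_le.mpr ?_ this
      rintro _ ⟨m', hm', rfl⟩ a i hi
      by_contra hne
      exact hi (Finset.mem_biUnion.mpr ⟨m', hm', Finset.mem_biUnion.mpr
        ⟨a, Finset.mem_univ a, DFinsupp.mem_support_iff.mpr hne⟩⟩)
    -- project onto the coordinates in S
    let g : M →ₗ[A] (Fin n → ((j : S) → F j.1)) :=
      (LinearMap.pi fun a : Fin n => LinearMap.pi fun j : S =>
        (DFinsupp.lapply j.1 : (⨁ i, F i) →ₗ[A] F j.1) ∘ₗ (LinearMap.proj a)) ∘ₗ f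
    have hg : Function.Injective g := by
      rw [injective_iff_map_eq_zero]
      intro m hm
      apply hf
      rw [map_zero]
      funext a
      refine DFinsupp.ext fun i => ?_
      by_cases hi : i ∈ S
      · have := congrFun (congrFun hm a) ⟨i, hi⟩
        simpa [g] using this
      · simpa using hrange m a i hi
    have hC : C (Fin n → ((j : S) → F j.1)) := by
      have h1 : C ((j : S) → F j.1) :=
        aux_pi C hiso hzero hsum (↥S) (fun j => F j.1) (fun j => hF j.1)
      exact aux_pi_fin C hiso hzero hsum n (fun _ => ((j : S) → F j.1)) _ _ (fun _ => h1)
    exact hsub M _ hC hMfin ⟨g, hg⟩
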